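/- Formula equivalence (equality up to renaming of bound variables) is symmetric: for all formulas α and α', if α ≈ α' then α' ≈ α. -/
import Mathlib


/-- Variables, indexed by natural numbers. -/
structure FOVar where
  idx : ℕ
deriving DecidableEq

/-- Function symbols: an index and an arity. -/
structure FOFunc where
  idx : ℕ
  arity : ℕ
deriving DecidableEq

/-- Relation symbols: an index and an arity. -/
structure FORel where
  idx : ℕ
  arity : ℕ
deriving DecidableEq

/-- Length-indexed vectors. -/
inductive Vec (A : Type) : ℕ → Type where
  | nil : Vec A 0
  | cons : ∀ {n}, A → Vec A n → Vec A (n + 1)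

/-- A predicate holds on every element of a vector. -/
inductive Vec.All {A : Type} (P : A → Prop) : ∀ {n}, Vec A n → Prop where
  | nil : Vec.All P Vec.nil
  | cons : ∀ {n x} {xs : Vec A n}, P x → Vec.All P xs → Vec.All P (Vec.cons x xs)

/-- First-order terms. -/
inductive Term : Type where
  | varterm : FOVar → Term
  | functerm : (f : FOFunc) → Vec Term f.arity → Term

/-- First-order formulas. -/
inductive Formula : Type where
  | atom : (r : FORel) → Vec Term r.arity → Formula
  | imp : Formula → Formula → Formula
  | and : Formula → Formula → Formula
  | or : Formula → Formula → Formula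
  | all : FOVar → Formula → Formula
  | ex : FOVar → Formula → Formula

/-- The variable x does not occur in a term. -/
inductive NotInTerm (x : FOVar) : Term → Prop where
  | varterm : ∀ {y}, x ≠ y → NotInTerm x (Term.varterm y)
  | functerm : ∀ {f} {us : Vec Term f.arity},
      Vec.All (NotInTerm x) us → NotInTerm x (Term.functerm f us)

/-- The variable x does not occur in any term of a vector. -/
def NotInTerms {n : ℕ} (x : FOVar) (ts : Vec Term n) : Prop :=
  Vec.All (NotInTerm x) ts

/-- The variable x is not free in a formula. -/
inductive NotFreeIn : FOVar → Formula → Prop where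
  | atom : ∀ {x r} {ts : Vec Term r.arity},
      NotInTerms x ts → NotFreeIn x (Formula.atom r ts)
  | imp : ∀ {x α β}, NotFreeIn x α → NotFreeIn x β → NotFreeIn x (Formula.imp α β)
  | and : ∀ {x α β}, NotFreeIn x α → NotFreeIn x β → NotFreeIn x (Formula.and α β)
  | or : ∀ {x α β}, NotFreeIn x α → NotFreeIn x β → NotFreeIn x (Formula.or α β)
  | all_self : ∀ x α, NotFreeIn x (Formula.all x α)
  | ex_self : ∀ x α, NotFreeIn x (Formula.ex x α)
  | all : ∀ {x α} (y : FOVar), NotFreeIn x α → NotFreeIn x (Formula.all y α)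
  | ex : ∀ {x α} (y : FOVar), NotFreeIn x α → NotFreeIn x (Formula.ex y α)

mutual
/-- ⟨u⟩[x/t]≡v : substituting t for x in the term u yields v. -/
inductive TermSub : Term → FOVar → Term → Term → Prop where
  | var_eq : ∀ {x t}, TermSub (Term.varterm x) x t t
  | var_ne : ∀ {x t y}, x ≠ y → TermSub (Term.varterm y) x t (Term.varterm y)
  | functerm : ∀ {x t f} {us vs : Vec Term f.arity},
      TermsSub us x t vs → TermSub (Term.functerm f us) x t (Term.functerm f vs)

/-- [us][x/t]≡vs : componentwise substitution in vectors of terms. -/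
inductive TermsSub : ∀ {n}, Vec Term n → FOVar → Term → Vec Term n → Prop where
  | nil : ∀ {x t}, TermsSub Vec.nil x t Vec.nil
  | cons : ∀ {x t u v n} {us vs : Vec Term n},
      TermSub u x t v → TermsSub us x t vs →
      TermsSub (Vec.cons u us) x t (Vec.cons v vs)
end

/-- α[x/t]≡β : substituting t for all free occurrences of x in α yields β. -/
inductive FormulaSub : Formula → FOVar → Term → Formula → Prop where
  | ident : ∀ α x, FormulaSub α x (Term.varterm x) α
  | notfree : ∀ {α x t}, NotFreeIn x α → FormulaSub α x t α
  | atom : ∀ {x t} (r : FORel) {us vs : Vec Term r.arity},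
      TermsSub us x t vs → FormulaSub (Formula.atom r us) x t (Formula.atom r vs)
  | imp : ∀ {α α' β β' x t}, FormulaSub α x t α' → FormulaSub β x t β' →
      FormulaSub (Formula.imp α β) x t (Formula.imp α' β')
  | and : ∀ {α α' β β' x t}, FormulaSub α x t α' → FormulaSub β x t β' →
      FormulaSub (Formula.and α β) x t (Formula.and α' β')
  | or : ∀ {α α' β β' x t}, FormulaSub α x t α' → FormulaSub β x t β' →
      FormulaSub (Formula.or α β) x t (Formula.or α' β')
  | all_self : ∀ {t} x α, FormulaSub (Formula.all x α) x t (Formula.all x α)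
  | ex_self : ∀ {t} x α, FormulaSub (Formula.ex x α) x t (Formula.ex x α)
  | all : ∀ {α β x y t}, x ≠ y → NotInTerm y t → FormulaSub α x t β →
      FormulaSub (Formula.all y α) x t (Formula.all y β)
  | ex : ∀ {α β x y t}, x ≠ y → NotInTerm y t → FormulaSub α x t β →
      FormulaSub (Formula.ex y α) x t (Formula.ex y β)

/-- The term t is free for the variable x in a formula. -/
inductive FreeFor (t : Term) (x : FOVar) : Formula → Prop where
  | notfree : ∀ {α}, NotFreeIn x α → FreeFor t x α
  | atom : ∀ r us, FreeFor t x (Formula.atom r us)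
  | imp : ∀ {α β}, FreeFor t x α → FreeFor t x β → FreeFor t x (Formula.imp α β)
  | and : ∀ {α β}, FreeFor t x α → FreeFor t x β → FreeFor t x (Formula.and α β)
  | or : ∀ {α β}, FreeFor t x α → FreeFor t x β → FreeFor t x (Formula.or α β)
  | all_self : ∀ α, FreeFor t x (Formula.all x α)
  | ex_self : ∀ α, FreeFor t x (Formula.ex x α)
  | all : ∀ {α y}, NotInTerm y t → FreeFor t x α → FreeFor t x (Formula.all y α)
  | ex : ∀ {α y}, NotInTerm y t → FreeFor t x α → FreeFor t x (Formula.ex y α)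

/-- The variable x appears nowhere (free or bound) in a formula. -/
inductive FreshIn (x : FOVar) : Formula → Prop where
  | atom : ∀ {r} {ts : Vec Term r.arity}, NotInTerms x ts → FreshIn x (Formula.atom r ts)
  | imp : ∀ {α β}, FreshIn x α → FreshIn x β → FreshIn x (Formula.imp α β)
  | and : ∀ {α β}, FreshIn x α → FreshIn x β → FreshIn x (Formula.and α β)
  | or : ∀ {α β}, FreshIn x α → FreshIn x β → FreshIn x (Formula.or α β)
  | all : ∀ {α y}, y ≠ x → FreshIn x α → FreshIn x (Formula.all y α)
  | ex : ∀ {α y}, y ≠ x → FreshIn x α → FreshIn x (Formula.ex y α)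

/-- Formula equivalence: equality up to renaming of bound variables. -/
inductive FormulaEquiv : Formula → Formula → Prop where
  | atom : ∀ r ts, FormulaEquiv (Formula.atom r ts) (Formula.atom r ts)
  | imp : ∀ {α β α' β'}, FormulaEquiv α α' → FormulaEquiv β β' →
      FormulaEquiv (Formula.imp α β) (Formula.imp α' β')
  | and : ∀ {α β α' β'}, FormulaEquiv α α' → FormulaEquiv β β' →
      FormulaEquiv (Formula.and α β) (Formula.and α' β')
  | or : ∀ {α β α' β'}, FormulaEquiv α α' → FormulaEquiv β β' →
      FormulaEquiv (Formula.or α β) (Formula.or α' β')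
  | all : ∀ {α α'} (x : FOVar), FormulaEquiv α α' → FormulaEquiv (Formula.all x α) (Formula.all x α')
  | ex : ∀ {α α'} (x : FOVar), FormulaEquiv α α' → FormulaEquiv (Formula.ex x α) (Formula.ex x α')
  | all_rename : ∀ {α β β' x y}, NotFreeIn y α →
      FormulaSub α x (Term.varterm y) β → FormulaEquiv β β' →
      FormulaEquiv (Formula.all x α) (Formula.all y β')
  | ex_rename : ∀ {α β β' x y}, NotFreeIn y α →
      FormulaSub α x (Term.varterm y) β → FormulaEquiv β β' →
      FormulaEquiv (Formula.ex x α) (Formula.ex y β')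
  | all_rename' : ∀ {α α' β' x y}, FormulaEquiv α α' → NotFreeIn y α' →
      FormulaSub α' x (Term.varterm y) β' →
      FormulaEquiv (Formula.all x α) (Formula.all y β')
  | ex_rename' : ∀ {α α' β' x y}, FormulaEquiv α α' → NotFreeIn y α' →
      FormulaSub α' x (Term.varterm y) β' →
      FormulaEquiv (Formula.ex x α) (Formula.ex y β')

/-- Natural deduction for minimal first-order logic. -/
inductive Deduction : Set Formula → Formula → Prop where
  | assume : ∀ (α : Formula), Deduction {α} α
  | close : ∀ {Γ Δ : Set Formula} {α}, Γ ⊆ Δ → Deduction Γ α → Deduction Δ α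
  | arrowintro : ∀ {Γ β} (α : Formula), Deduction Γ β →
      Deduction (Γ \ {α}) (Formula.imp α β)
  | arrowelim : ∀ {Γ₁ Γ₂ α β}, Deduction Γ₁ (Formula.imp α β) → Deduction Γ₂ α →
      Deduction (Γ₁ ∪ Γ₂) β
  | conjintro : ∀ {Γ₁ Γ₂ α β}, Deduction Γ₁ α → Deduction Γ₂ β →
      Deduction (Γ₁ ∪ Γ₂) (Formula.and α β)
  | conjelim : ∀ {Γ₁ Γ₂ α β γ}, Deduction Γ₁ (Formula.and α β) → Deduction Γ₂ γ →
      Deduction (Γ₁ ∪ (Γ₂ \ {α, β})) γ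
  | disjintro1 : ∀ {Γ α} (β : Formula), Deduction Γ α → Deduction Γ (Formula.or α β)
  | disjintro2 : ∀ {Γ β} (α : Formula), Deduction Γ β → Deduction Γ (Formula.or α β)
  | disjelim : ∀ {Γ₁ Γ₂ Γ₃ α β γ}, Deduction Γ₁ (Formula.or α β) →
      Deduction Γ₂ γ → Deduction Γ₃ γ →
      Deduction (Γ₁ ∪ (Γ₂ \ {α}) ∪ (Γ₃ \ {β})) γ
  | univintro : ∀ {Γ α} (x : FOVar), (∀ γ ∈ Γ, NotFreeIn x γ) →
      Deduction Γ α → Deduction Γ (Formula.all x α)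
  | univelim : ∀ {Γ α x β} (t : Term), FormulaSub α x t β →
      Deduction Γ (Formula.all x α) → Deduction Γ β
  | existintro : ∀ {Γ α β} (t : Term) (x : FOVar), FormulaSub α x t β →
      Deduction Γ β → Deduction Γ (Formula.ex x α)
  | existelim : ∀ {Γ₁ Γ₂ α β x}, NotFreeIn x β → (∀ γ ∈ Γ₂ \ {α}, NotFreeIn x γ) →
      Deduction Γ₁ (Formula.ex x α) → Deduction Γ₂ β →
      Deduction (Γ₁ ∪ (Γ₂ \ {α})) β

/-- ⊥: the atom of a fixed nullary relation symbol. -/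
def Formula.bot : Formula := Formula.atom ⟨0, 0⟩ Vec.nil

/-- ¬α is α ⇒ ⊥. -/
def Formula.neg (α : Formula) : Formula := Formula.imp α Formula.bot

mutual
theorem termSub_self : ∀ {u : Term} {x v}, TermSub u x (Term.varterm x) v → v = u
  | _, _, _, .var_eq => rfl
  | _, _, _, .var_ne _ => rfl
  | _, _, _, .functerm h => by rw [termsSub_self h]

theorem termsSub_self : ∀ {n} {us : Vec Term n} {x vs},
    TermsSub us x (Term.varterm x) vs → vs = us
  | _, _, _, _, .nil => rfl
  | _, _, _, _, .cons h hs => by rw [termSub_self h, termsSub_self hs]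
end

mutual
theorem termSub_notin : ∀ {u : Term} {x y v}, x ≠ y →
    TermSub u x (Term.varterm y) v → NotInTerm x v
  | _, _, _, _, hxy, .var_eq => .varterm hxy
  | _, _, _, _, _, .var_ne hne => .varterm hne
  | _, _, _, _, hxy, .functerm h => .functerm (termsSub_notin hxy h)

theorem termsSub_notin : ∀ {n} {us : Vec Term n} {x y vs}, x ≠ y →
    TermsSub us x (Term.varterm y) vs → Vec.All (NotInTerm x) vs
  | _, _, _, _, _, _, .nil => .nil
  | _, _, _, _, _, hxy, .cons h hs =>
      .cons (termSub_notin hxy h) (termsSub_notin hxy hs)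
end

mutual
theorem termSub_inv : ∀ {u : Term} {x y v}, NotInTerm y u →
    TermSub u x (Term.varterm y) v → TermSub v y (Term.varterm x) u
  | _, _, _, _, _, .var_eq => .var_eq
  | _, _, _, _, .varterm hne, .var_ne _ => .var_ne hne
  | _, _, _, _, .functerm hnf, .functerm h => .functerm (termsSub_inv hnf h)

theorem termsSub_inv : ∀ {n} {us : Vec Term n} {x y vs}, Vec.All (NotInTerm y) us →
    TermsSub us x (Term.varterm y) vs → TermsSub vs y (Term.varterm x) us
  | _, _, _, _, _, _, .nil => .nil
  | _, _, _, _, _, .cons hnf hnfs, .cons h hs =>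
      .cons (termSub_inv hnf h) (termsSub_inv hnfs hs)
end

theorem formulaSub_self_aux : ∀ {α x t β}, FormulaSub α x t β →
    t = Term.varterm x → β = α := by
  intro α x t β h
  induction h with
  | ident => intro _; rfl
  | notfree => intro _; rfl
  | atom r hus => intro ht; subst ht; rw [termsSub_self hus]
  | imp _ _ ih1 ih2 => intro ht; rw [ih1 ht, ih2 ht]
  | and _ _ ih1 ih2 => intro ht; rw [ih1 ht, ih2 ht]
  | or _ _ ih1 ih2 => intro ht; rw [ih1 ht, ih2 ht]
  | all_self => intro _; rfl
  | ex_self => intro _; rfl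
  | all _ _ _ ih => intro ht; rw [ih ht]
  | ex _ _ _ ih => intro ht; rw [ih ht]

theorem formulaSub_self {α x β} (h : FormulaSub α x (Term.varterm x) β) : β = α :=
  formulaSub_self_aux h rfl

theorem formulaSub_notfree_aux : ∀ {α x t β}, FormulaSub α x t β →
    ∀ {y}, t = Term.varterm y → x ≠ y → NotFreeIn x β := by
  intro α x t β h
  induction h with
  | ident => intro y ht hxy; cases ht; exact absurd rfl hxy
  | notfree hnf => intro _ _ _; exact hnf
  | atom r hus => intro y ht hxy; subst ht; exact .atom (termsSub_notin hxy hus)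
  | imp _ _ ih1 ih2 => intro y ht hxy; exact .imp (ih1 ht hxy) (ih2 ht hxy)
  | and _ _ ih1 ih2 => intro y ht hxy; exact .and (ih1 ht hxy) (ih2 ht hxy)
  | or _ _ ih1 ih2 => intro y ht hxy; exact .or (ih1 ht hxy) (ih2 ht hxy)
  | all_self x α => intro _ _ _; exact .all_self x α
  | ex_self x α => intro _ _ _; exact .ex_self x α
  | all _ _ _ ih => intro y ht hxy; exact .all _ (ih ht hxy)
  | ex _ _ _ ih => intro y ht hxy; exact .ex _ (ih ht hxy)

theorem formulaSub_notfree {α x y β} (hxy : x ≠ y)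
    (h : FormulaSub α x (Term.varterm y) β) : NotFreeIn x β :=
  formulaSub_notfree_aux h rfl hxy

theorem formulaSub_inv_aux : ∀ {α x t β}, FormulaSub α x t β →
    ∀ {y}, t = Term.varterm y → NotFreeIn y α → FormulaSub β y (Term.varterm x) α := by
  intro α x t β h
  induction h with
  | ident α x => intro y ht _; cases ht; exact .ident α _
  | notfree _ => intro y _ hnf; exact .notfree hnf
  | atom r hus =>
      intro y ht hnf; subst ht
      cases hnf with
      | atom hts => exact .atom r (termsSub_inv hts hus)
  | imp _ _ ih1 ih2 =>
      intro y ht hnf; cases hnf with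
      | imp h1 h2 => exact .imp (ih1 ht h1) (ih2 ht h2)
  | and _ _ ih1 ih2 =>
      intro y ht hnf; cases hnf with
      | and h1 h2 => exact .and (ih1 ht h1) (ih2 ht h2)
  | or _ _ ih1 ih2 =>
      intro y ht hnf; cases hnf with
      | or h1 h2 => exact .or (ih1 ht h1) (ih2 ht h2)
  | all_self x α => intro y _ hnf; exact .notfree hnf
  | ex_self x α => intro y _ hnf; exact .notfree hnf
  | all hxz hz _ ih =>
      intro y ht hnf; subst ht
      cases hz with
      | varterm hzy =>
        cases hnf with
        | all_self => exact absurd rfl hzy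
        | all _ hnf' =>
            exact .all (Ne.symm hzy) (.varterm (Ne.symm hxz)) (ih rfl hnf')
  | ex hxz hz _ ih =>
      intro y ht hnf; subst ht
      cases hz with
      | varterm hzy =>
        cases hnf with
        | ex_self => exact absurd rfl hzy
        | ex _ hnf' =>
            exact .ex (Ne.symm hzy) (.varterm (Ne.symm hxz)) (ih rfl hnf')

theorem formulaSub_inv {α x y β} (hnf : NotFreeIn y α)
    (h : FormulaSub α x (Term.varterm y) β) : FormulaSub β y (Term.varterm x) α :=
  formulaSub_inv_aux h rfl hnf

/-- Formula equivalence is symmetric. -/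
theorem formulaEquiv_symm {α α' : Formula} (h : FormulaEquiv α α') :
    FormulaEquiv α' α := by
  induction h with
  | atom r ts => exact .atom r ts
  | imp _ _ ih1 ih2 => exact .imp ih1 ih2
  | and _ _ ih1 ih2 => exact .and ih1 ih2
  | or _ _ ih1 ih2 => exact .or ih1 ih2
  | all x _ ih => exact .all x ih
  | ex x _ ih => exact .ex x ih
  | @all_rename α β β' x y hnf hsub _ ih =>
      by_cases hxy : x = y
      · subst hxy
        rw [formulaSub_self hsub] at ih
        exact .all x ih
      · exact .all_rename' ih (formulaSub_notfree hxy hsub) (formulaSub_inv hnf hsub)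
  | @ex_rename α β β' x y hnf hsub _ ih =>
      by_cases hxy : x = y
      · subst hxy
        rw [formulaSub_self hsub] at ih
        exact .ex x ih
      · exact .ex_rename' ih (formulaSub_notfree hxy hsub) (formulaSub_inv hnf hsub)
  | @all_rename' α α' β' x y _ hnf hsub ih =>
      by_cases hxy : x = y
      · subst hxy
        rw [formulaSub_self hsub]
        exact .all x ih
      · exact .all_rename (formulaSub_notfree hxy hsub) (formulaSub_inv hnf hsub) ih
  | @ex_rename' α α' β' x y _ hnf hsub ih =>
      by_cases hxy : x = y
      · subst hxy
        rw [formulaSub_self hsub]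
        exact .ex x ih
      · exact .ex_rename (formulaSub_notfree hxy hsub) (formulaSub_inv hnf hsub) ih
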